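/- arXiv:1209.4307 — 3 statements merged into one kernel-verified Lean document; each statement's English description precedes it below -/
import Mathlib

section
/- Let C be a small category. If A is a complete abelian category with enough injectives, then the functor category C(A) has enough injectives; that is, every object of C(A) admits a monomorphism into an injective object of C(A). -/
/-!
STATEMENT 12: If `A` is a complete abelian category with enough injectives,
then for any small category `C` the functor category `C ⥤ A` has enough
injectives.
-/

open CategoryTheory Limits

theorem functor_category_enoughInjectives_of_complete
    (C : Type v) [SmallCategory C] (A : Type u) [Category.{v} A]
    [Abelian A] [HasLimits A] [EnoughInjectives A] :
    EnoughInjectives (C ⥤ A) := by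
  constructor
  intro F
  let G : C → (C ⥤ A) := fun c =>
    (evaluationRightAdjoint A c).obj (Injective.under (F.obj c))
  have hG : ∀ c, Injective (G c) := fun c =>
    Injective.injective_of_adjoint (evaluationAdjunctionLeft A c) _
  have : ∀ c, Injective (G c) := hG
  let η : ∀ c : C, F ⟶ G c := fun c =>
    ((evaluationAdjunctionLeft A c).homEquiv F _) (Injective.ι (F.obj c))
  have happ : ∀ d : C, Mono ((Pi.lift η).app d) := by
    intro d
    have h1 : (Pi.lift η ≫ Pi.π G d).app d ≫ Pi.π _ (𝟙 d) = Injective.ι (F.obj d) := by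
      rw [Pi.lift_π]
      simp [η, Adjunction.homEquiv, evaluationAdjunctionLeft]
      erw [Category.assoc, Pi.lift_π, Pi.lift_π_assoc, F.map_id, Category.id_comp]
    rw [NatTrans.comp_app] at h1
    erw [Category.assoc] at h1
    exact mono_of_mono_fac h1
  have hmono : Mono (Pi.lift η) := NatTrans.mono_of_mono_app _
  exact ⟨{ J := ∏ᶜ G, injective := inferInstance, f := Pi.lift η, mono := hmono }⟩
end

section
/- Let A be an abelian category with enough injectives and let C be a category with finitely many objects and finitely many morphisms. Then the functor category C(A) has enough injectives. -/
/-!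
STATEMENT 13: If `A` is an abelian category with enough injectives and `C` is
a category with finitely many objects and finitely many morphisms, then the
functor category `C ⥤ A` has enough injectives.
-/

open CategoryTheory Limits

namespace Aux13

variable {C : Type u₁} [Category.{v₁} C] {A : Type u₂} [Category.{v₂} A] [Abelian A]

variable [Finite (Σ (a b : C), a ⟶ b)]

instance finArrows (c' : C) : Finite (Σ c : C, c' ⟶ c) :=
  Finite.of_injective (fun p => (⟨c', p.1, p.2⟩ : Σ a b : C, a ⟶ b))
    (by rintro ⟨a, f⟩ ⟨b, g⟩ h; simpa using h)

/-- The "coinduced" functor `c' ↦ ∏_{(c, f : c' ⟶ c)} I c`. -/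
noncomputable def J (I : C → A) : C ⥤ A where
  obj c' := ∏ᶜ fun p : Σ c : C, (c' ⟶ c) => I p.1
  map {c' d} g := Pi.lift fun p => Pi.π (fun q : Σ c : C, (c' ⟶ c) => I q.1) ⟨p.1, g ≫ p.2⟩
  map_id c' := by
    apply Pi.hom_ext
    rintro ⟨c'', k⟩
    rw [Pi.lift_π, Category.id_comp, Category.id_comp]
  map_comp {c' d e} g g' := by
    apply Pi.hom_ext
    rintro ⟨c'', k⟩
    dsimp only
    simp only [Pi.lift_π, Category.assoc]
    rw [Category.assoc]

@[simp] lemma J_map_π (I : C → A) {c' d : C} (g : c' ⟶ d) (p : Σ c : C, (d ⟶ c)) :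
    (J I).map g ≫ Pi.π (fun q : Σ c : C, (d ⟶ c) => I q.1) p
      = Pi.π (fun q : Σ c : C, (c' ⟶ c) => I q.1) ⟨p.1, g ≫ p.2⟩ := by
  simp only [J, Pi.lift_π]

/-- The canonical map `F ⟶ J I` induced by maps `i c : F c ⟶ I c`. -/
noncomputable def toJ (F : C ⥤ A) (I : C → A) (i : ∀ c, F.obj c ⟶ I c) : F ⟶ J I where
  app c' := Pi.lift fun p : Σ c : C, (c' ⟶ c) => F.map p.2 ≫ i p.1
  naturality c' d h := by
    apply Pi.hom_ext
    rintro ⟨c'', k⟩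
    dsimp only
    erw [Category.assoc, Pi.lift_π, Category.assoc, J_map_π, Pi.lift_π]
    rw [← Functor.map_comp_assoc]

lemma toJ_app_π (F : C ⥤ A) (I : C → A) (i : ∀ c, F.obj c ⟶ I c) (c' : C)
    (p : Σ c : C, (c' ⟶ c)) :
    (toJ F I i).app c' ≫ Pi.π (fun q : Σ c : C, (c' ⟶ c) => I q.1) p
      = F.map p.2 ≫ i p.1 := by
  simp only [toJ, Pi.lift_π]
  exact Pi.lift_π _ _

lemma mono_toJ (F : C ⥤ A) (I : C → A) (i : ∀ c, F.obj c ⟶ I c) [∀ c, Mono (i c)] :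
    Mono (toJ F I i) := by
  have : ∀ c, Mono ((toJ F I i).app c) := by
    intro c
    have h : (toJ F I i).app c ≫
        Pi.π (fun q : Σ c'' : C, (c ⟶ c'') => I q.1) ⟨c, 𝟙 c⟩ = i c := by
      rw [toJ_app_π]
      simp
    exact mono_of_mono_fac h
  exact NatTrans.mono_of_mono_app _

theorem J_injective (I : C → A) [∀ c, Injective (I c)] : Injective (J I) where
  factors {X Y} f u hu := by
    have hmono : ∀ c, Mono (u.app c) := fun c => inferInstance
    choose g hg using fun c =>
      Injective.factors
        (f.app c ≫ Pi.π (fun q : Σ c'' : C, (c ⟶ c'') => I q.1) ⟨c, 𝟙 c⟩) (u.app c)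
    refine ⟨toJ Y I g, ?_⟩
    apply NatTrans.ext
    funext c'
    apply Pi.hom_ext
    rintro ⟨c'', k⟩
    erw [NatTrans.comp_app, Category.assoc, toJ_app_π]
    calc u.app c' ≫ Y.map k ≫ g c''
        = X.map k ≫ u.app c'' ≫ g c'' := by rw [NatTrans.naturality_assoc]
      _ = X.map k ≫ f.app c'' ≫
            Pi.π (fun q : Σ e : C, (c'' ⟶ e) => I q.1) ⟨c'', 𝟙 c''⟩ := by rw [hg]
      _ = f.app c' ≫ (J I).map k ≫
            Pi.π (fun q : Σ e : C, (c'' ⟶ e) => I q.1) ⟨c'', 𝟙 c''⟩ := by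
          erw [NatTrans.naturality_assoc]
      _ = f.app c' ≫ Pi.π (fun q : Σ e : C, (c' ⟶ e) => I q.1) ⟨c'', k⟩ := by
          rw [J_map_π, Category.comp_id]

end Aux13

theorem functor_category_enoughInjectives_of_finite
    (C : Type u₁) [Category.{v₁} C] [Finite C] [Finite (Σ (a b : C), a ⟶ b)]
    (A : Type u₂) [Category.{v₂} A] [Abelian A] [EnoughInjectives A] :
    EnoughInjectives (C ⥤ A) := by
  constructor
  intro F
  exact ⟨⟨Aux13.J (fun c => Injective.under (F.obj c)), Aux13.J_injective _,
    Aux13.toJ F _ (fun c => Injective.ι (F.obj c)),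
    Aux13.mono_toJ F _ (fun c => Injective.ι (F.obj c))⟩⟩
end

section
/- Let Q be a quiver with at least one vertex and let 𝒬 be its path category. Let A and B be additive categories (in particular, with zero objects) and let F : A → B be an additive functor. Then F is an equivalence of categories if and only if the induced functor F_𝒬 : 𝒬(A) → 𝒬(B) is an equivalence of categories. -/
/-!
STATEMENT 18: Let `Q` be a quiver with at least one vertex, `𝒬 = Paths Q` its
path category, `A` and `B` additive categories and `F : A ⥤ B` an additive
functor. Then `F` is an equivalence of categories if and only if the induced
functor `F_𝒬 : (𝒬 ⥤ A) ⥤ (𝒬 ⥤ B)` (postcomposition with `F`) is an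
equivalence of categories.
-/

open CategoryTheory Limits

theorem isEquivalence_iff_induced_functor_isEquivalence
    (V : Type u₀) [Quiver.{v₀ + 1} V] [Nonempty V]
    (A : Type u₁) [Category.{v₁} A] [Preadditive A] [HasZeroObject A]
    [HasBinaryBiproducts A]
    (B : Type u₂) [Category.{v₂} B] [Preadditive B] [HasZeroObject B]
    [HasBinaryBiproducts B]
    (F : A ⥤ B) [F.Additive] :
    F.IsEquivalence ↔ ((Functor.whiskeringRight (Paths V) A B).obj F).IsEquivalence := by
  constructor
  · intro h
    infer_instance
  · intro h
    obtain ⟨v⟩ := ‹Nonempty V›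
    set W := (Functor.whiskeringRight (Paths V) A B).obj F with hW
    have hfaith : F.Faithful := by
      constructor
      intro X Y f g hfg
      have : W.map ((Functor.const (Paths V)).map f (X := X) (Y := Y)) =
          W.map ((Functor.const (Paths V)).map g (X := X) (Y := Y)) := by
        ext x
        simpa [W] using hfg
      have := W.map_injective this
      have := congrArg (fun η => η.app ((Paths.of V).obj v)) this
      simpa using this
    have hfull : F.Full := by
      constructor
      intro X Y h'
      -- natural transformation const (F.obj X) ⟶ const (F.obj Y) with all components h'
      obtain ⟨η, hη⟩ := W.map_surjective (X := (Functor.const (Paths V)).obj X)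
        (Y := (Functor.const (Paths V)).obj Y)
        { app := fun _ => h'
          naturality := by intros; simp [W] }
      refine ⟨η.app ((Paths.of V).obj v), ?_⟩
      have := congrArg (fun τ => τ.app ((Paths.of V).obj v)) hη
      simpa [W] using this
    have hess : F.EssSurj := by
      constructor
      intro Y
      obtain ⟨G, ⟨e⟩⟩ := Functor.EssSurj.mem_essImage (F := W) ((Functor.const (Paths V)).obj Y)
      exact ⟨G.obj ((Paths.of V).obj v), ⟨e.app ((Paths.of V).obj v)⟩⟩
    exact { }
end
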